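/- For every w > 0, the map ρ ↦ (ρ · w · v(ρ)) / (w + v(ρ)) is strictly concave on [0,1], where v is C², nonincreasing (v' ≤ 0), and ρ ↦ ρ·v(ρ) is strictly concave. More precisely, writing q(ρ) = ρ·v(ρ) and q_w(ρ) = ρ·w·v(ρ)/(w + v(ρ)), one has q_w''(ρ) = w²·((v(ρ)+w)·q''(ρ) − 2ρ·v'(ρ)²)/(v(ρ)+w)³ ≤ 0, with strict inequality wherever q'' < 0. -/

import Mathlib

/-- For `v ∈ C²` nonincreasing with strictly concave flux `q(ρ) = ρ·v(ρ)`,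
the map `q_w(ρ) = ρ·w·v(ρ)/(w + v(ρ))` has second derivative
`w²·((v+w)·q'' − 2ρ·v'²)/(v+w)³`, which is negative (hence `≤ 0`) on `[0,1]`. -/
theorem stmt0 (V w : ℝ) (hV : 0 < V) (hw : 0 < w)
    (v : ℝ → ℝ) (hv : ContDiff ℝ 2 v)
    (hrange : ∀ ρ ∈ Set.Icc (0:ℝ) 1, v ρ ∈ Set.Icc (0:ℝ) V)
    (hv1 : v 1 = 0)
    (hv' : ∀ ρ ∈ Set.Icc (0:ℝ) 1, deriv v ρ ≤ 0)
    (hq'' : ∀ ρ ∈ Set.Icc (0:ℝ) 1, deriv (deriv (fun r => r * v r)) ρ < 0) :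
    ∀ ρ ∈ Set.Icc (0:ℝ) 1,
      deriv (deriv (fun r => r * w * v r / (w + v r))) ρ
        = w ^ 2 * ((v ρ + w) * deriv (deriv (fun r => r * v r)) ρ
            - 2 * ρ * (deriv v ρ) ^ 2) / (v ρ + w) ^ 3
      ∧ w ^ 2 * ((v ρ + w) * deriv (deriv (fun r => r * v r)) ρ
            - 2 * ρ * (deriv v ρ) ^ 2) / (v ρ + w) ^ 3 ≤ 0
      ∧ (deriv (deriv (fun r => r * v r)) ρ < 0 →
          w ^ 2 * ((v ρ + w) * deriv (deriv (fun r => r * v r)) ρ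
            - 2 * ρ * (deriv v ρ) ^ 2) / (v ρ + w) ^ 3 < 0) := by
  have hvdiff : Differentiable ℝ v := hv.differentiable (by norm_num)
  have hv'cd : ContDiff ℝ 1 (deriv v) := by
    have h := contDiff_succ_iff_deriv.mp (by exact_mod_cast hv : ContDiff ℝ (1+1) v)
    exact h.2.2
  have hv'diff : Differentiable ℝ (deriv v) := hv'cd.differentiable (by norm_num)
  -- second derivative of q
  have hq1 : (deriv (fun r => r * v r)) = fun r => 1 * v r + r * deriv v r := by
    funext r
    exact ((hasDerivAt_id r).mul (hvdiff r).hasDerivAt).deriv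
  have hqsec : ∀ r : ℝ, deriv (deriv (fun r => r * v r)) r
      = 2 * deriv v r + r * deriv (deriv v) r := by
    intro r
    rw [hq1]
    have h : HasDerivAt (fun r => 1 * v r + r * deriv v r)
        (1 * deriv v r + (1 * deriv v r + r * deriv (deriv v) r)) r :=
      (((hvdiff r).hasDerivAt).const_mul 1).add
        ((hasDerivAt_id r).mul ((hv'diff r).hasDerivAt))
    rw [h.deriv]; ring
  intro ρ hρ
  obtain ⟨hρ0, hρ1⟩ := hρ
  have hvρ := hrange ρ ⟨hρ0, hρ1⟩
  have hd : 0 < v ρ + w := by linarith [hvρ.1]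
  have hdne : w + v ρ ≠ 0 := by linarith [hvρ.1]
  -- open set where denominator positive
  have hUopen : IsOpen {r : ℝ | 0 < w + v r} :=
    isOpen_lt continuous_const (continuous_const.add hv.continuous)
  have hρU : ρ ∈ {r : ℝ | 0 < w + v r} := by
    simp only [Set.mem_setOf_eq]; linarith [hvρ.1]
  -- first derivative formula on U
  have key1 : ∀ r ∈ {r : ℝ | 0 < w + v r},
      HasDerivAt (fun r => r * w * v r / (w + v r))
        (w * v r / (w + v r) + w ^ 2 * r * deriv v r / (w + v r) ^ 2) r := by
    intro r hr
    have hrne : w + v r ≠ 0 := ne_of_gt hr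
    have h1 : HasDerivAt (fun r => r * w * v r)
        (1 * w * v r + r * w * deriv v r) r :=
      ((hasDerivAt_id r).mul_const w).mul (hvdiff r).hasDerivAt
    have h2 : HasDerivAt (fun r => w + v r) (deriv v r) r :=
      ((hvdiff r).hasDerivAt).const_add w
    have h : HasDerivAt (fun r => r * w * v r / (w + v r)) _ r := h1.div h2 hrne
    convert h using 1
    field_simp
    ring
  have hev : deriv (fun r => r * w * v r / (w + v r))
      =ᶠ[nhds ρ] fun r => w * v r / (w + v r) + w ^ 2 * r * deriv v r / (w + v r) ^ 2 := by
    filter_upwards [hUopen.mem_nhds hρU] with r hr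
    exact (key1 r hr).deriv
  have hderiv2 : deriv (deriv (fun r => r * w * v r / (w + v r))) ρ
      = deriv (fun r => w * v r / (w + v r) + w ^ 2 * r * deriv v r / (w + v r) ^ 2) ρ :=
    hev.deriv_eq
  -- derivative of the explicit first-derivative formula
  have h2ρ : HasDerivAt (fun r => w + v r) (deriv v ρ) ρ :=
    ((hvdiff ρ).hasDerivAt).const_add w
  have hA : HasDerivAt (fun r => w * v r / (w + v r))
      ((w * deriv v ρ * (w + v ρ) - w * v ρ * deriv v ρ) / (w + v ρ) ^ 2) ρ :=
    (((hvdiff ρ).hasDerivAt).const_mul w).div h2ρ hdne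
  have hBnum : HasDerivAt (fun r => w ^ 2 * r * deriv v r)
      (w ^ 2 * 1 * deriv v ρ + w ^ 2 * ρ * deriv (deriv v) ρ) ρ := by
    exact ((hasDerivAt_id ρ).const_mul (w ^ 2)).mul ((hv'diff ρ).hasDerivAt)
  have hBden : HasDerivAt (fun r => (w + v r) ^ 2)
      (2 * (w + v ρ) ^ 1 * deriv v ρ) ρ := by
    have h : HasDerivAt (fun r => (w + v r) ^ 2) _ ρ := h2ρ.pow 2
    simpa using h
  have hdne2 : (w + v ρ) ^ 2 ≠ 0 := pow_ne_zero 2 hdne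
  have hB : HasDerivAt (fun r => w ^ 2 * r * deriv v r / (w + v r) ^ 2) _ ρ :=
    hBnum.div hBden hdne2
  have hAB : HasDerivAt
      (fun r => w * v r / (w + v r) + w ^ 2 * r * deriv v r / (w + v r) ^ 2) _ ρ :=
    hA.add hB
  have hmain : deriv (fun r => w * v r / (w + v r) + w ^ 2 * r * deriv v r / (w + v r) ^ 2) ρ
      = w ^ 2 * ((v ρ + w) * deriv (deriv (fun r => r * v r)) ρ
          - 2 * ρ * (deriv v ρ) ^ 2) / (v ρ + w) ^ 3 := by
    rw [hAB.deriv, hqsec ρ]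
    have hd3 : (v ρ + w) ^ 3 ≠ 0 := by positivity
    field_simp
    ring
  have heq : deriv (deriv (fun r => r * w * v r / (w + v r))) ρ
      = w ^ 2 * ((v ρ + w) * deriv (deriv (fun r => r * v r)) ρ
          - 2 * ρ * (deriv v ρ) ^ 2) / (v ρ + w) ^ 3 := hderiv2.trans hmain
  refine ⟨heq, ?_, ?_⟩
  · have hq := hq'' ρ ⟨hρ0, hρ1⟩
    apply div_nonpos_of_nonpos_of_nonneg
    · have h1 : (v ρ + w) * deriv (deriv (fun r => r * v r)) ρ < 0 :=
        mul_neg_of_pos_of_neg hd hq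
      have h2 : 0 ≤ ρ * (deriv v ρ) ^ 2 := mul_nonneg hρ0 (sq_nonneg _)
      have h3 : (v ρ + w) * deriv (deriv (fun r => r * v r)) ρ
          - 2 * ρ * (deriv v ρ) ^ 2 < 0 := by linarith
      exact le_of_lt (mul_neg_of_pos_of_neg (pow_pos hw 2) h3)
    · positivity
  · intro hq
    apply div_neg_of_neg_of_pos
    · have h1 : (v ρ + w) * deriv (deriv (fun r => r * v r)) ρ < 0 :=
        mul_neg_of_pos_of_neg hd hq
      have h2 : 0 ≤ ρ * (deriv v ρ) ^ 2 := mul_nonneg hρ0 (sq_nonneg _)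
      have h3 : (v ρ + w) * deriv (deriv (fun r => r * v r)) ρ
          - 2 * ρ * (deriv v ρ) ^ 2 < 0 := by linarith
      exact mul_neg_of_pos_of_neg (pow_pos hw 2) h3
    · positivity
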